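/- In the proof of the A-tilted span bound: with $A$ an upper triangular diagonal-dominated substochastic tilting matrix, $h' = \sum_{j=1}^l \lambda_j |x_j\rangle$ where $|x_j\rangle = \mathcal{T}_{j,A}(|y_j\rangle)$ for unit vectors $|y_j\rangle\in W_j$, the coefficients satisfy for every $i\in[l]$: $|\lambda_i| \le \|h'\|_2 \sum_{j=i}^l 2^{j-i}\alpha_{jj}^{-1/2}$. -/

import Mathlib

open Finset

/-- Splitting off the first term of the tilted-span coefficient sum. -/
private lemma stmt6_split {l : ℕ} (c : Fin l → ℝ) (i : Fin l) :
    ∑ k ∈ Finset.univ.filter (fun k => i ≤ k), (2:ℝ)^((k:ℕ)-(i:ℕ)) * c k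
      = c i + 2 * ∑ k ∈ Finset.univ.filter (fun k => i < k),
          (2:ℝ)^((k:ℕ)-((i:ℕ)+1)) * c k := by
  have hne : i ∉ Finset.univ.filter (fun k : Fin l => i < k) := by simp
  have hfe : Finset.univ.filter (fun k : Fin l => i ≤ k)
      = insert i (Finset.univ.filter (fun k : Fin l => i < k)) := by
    ext k
    simp only [mem_filter, mem_univ, true_and, mem_insert, Fin.le_def, Fin.lt_def, Fin.ext_iff]
    omega
  rw [hfe, Finset.sum_insert hne, Nat.sub_self, pow_zero, one_mul, Finset.mul_sum]
  congr 1
  refine Finset.sum_congr rfl fun k hk => ?_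
  simp only [mem_filter, mem_univ, true_and, Fin.lt_def] at hk
  have h2 : (k:ℕ) - (i:ℕ) = ((k:ℕ) - ((i:ℕ)+1)) + 1 := by omega
  rw [h2, pow_succ]
  ring

/-- Combinatorial inequality: `c i + ∑_{j>i} B j ≤ B i` where
`B i = ∑_{k≥i} 2^(k-i) c k`, proved by downward induction. -/
private lemma stmt6_comb {l : ℕ} (c : Fin l → ℝ) (hc : ∀ j, 0 < c j) :
    ∀ n : ℕ, ∀ i : Fin l, l - (i:ℕ) ≤ n →
      c i + (∑ j ∈ Finset.univ.filter (fun j => i < j),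
          ∑ k ∈ Finset.univ.filter (fun k => j ≤ k), (2:ℝ)^((k:ℕ)-(j:ℕ)) * c k)
        ≤ ∑ k ∈ Finset.univ.filter (fun k => i ≤ k), (2:ℝ)^((k:ℕ)-(i:ℕ)) * c k := by
  intro n
  induction n with
  | zero =>
    intro i hi
    exact absurd hi (by have := i.2; omega)
  | succ n ih =>
    intro i hi
    by_cases h1 : (i:ℕ)+1 < l
    · set i' : Fin l := ⟨(i:ℕ)+1, h1⟩ with hi'def
      have hvi' : (i' : ℕ) = (i:ℕ)+1 := rfl
      have key := ih i' (by rw [hvi']; omega)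
      have hfe : Finset.univ.filter (fun j : Fin l => i < j)
          = insert i' (Finset.univ.filter (fun j : Fin l => i' < j)) := by
        ext j
        simp only [mem_filter, mem_univ, true_and, mem_insert, Fin.lt_def, Fin.ext_iff, hvi']
        omega
      have hne : i' ∉ Finset.univ.filter (fun j : Fin l => i' < j) := by simp
      have hfe2 : Finset.univ.filter (fun k : Fin l => i' ≤ k)
          = Finset.univ.filter (fun k : Fin l => i < k) := by
        ext k
        simp only [mem_filter, mem_univ, true_and, Fin.le_def, Fin.lt_def, hvi']
        omega
      rw [hfe, Finset.sum_insert hne]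
      rw [hfe2, hvi'] at key
      have hBi := stmt6_split c i
      have hS : ∑ j ∈ Finset.univ.filter (fun j : Fin l => i' < j),
          ∑ k ∈ Finset.univ.filter (fun k => j ≤ k), (2:ℝ)^((k:ℕ)-(j:ℕ)) * c k
            ≤ ∑ k ∈ Finset.univ.filter (fun k : Fin l => i < k),
                (2:ℝ)^((k:ℕ)-((i:ℕ)+1)) * c k := by
        have := hc i'
        linarith
      have hB' : ∑ k ∈ Finset.univ.filter (fun k : Fin l => i' ≤ k),
          (2:ℝ)^((k:ℕ)-((i':ℕ))) * c k
            = ∑ k ∈ Finset.univ.filter (fun k : Fin l => i < k),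
                (2:ℝ)^((k:ℕ)-((i:ℕ)+1)) * c k := by
        rw [hfe2, hvi']
      rw [hB']
      rw [hBi]
      linarith
    · have hfe : Finset.univ.filter (fun j : Fin l => i < j) = ∅ := by
        ext j
        simp only [mem_filter, mem_univ, true_and, Fin.lt_def, Finset.notMem_empty, iff_false]
        have := j.2
        omega
      rw [hfe, Finset.sum_empty, add_zero]
      have hmem : i ∈ Finset.univ.filter (fun k : Fin l => i ≤ k) := by simp
      have := Finset.single_le_sum
        (f := fun k : Fin l => (2:ℝ)^((k:ℕ)-(i:ℕ)) * c k)
        (fun k _ => mul_nonneg (by positivity) (hc k).le) hmem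
      simpa using this

/-- From the recurrence `lamn i ≤ D c i + ∑_{j>i} lamn j` deduce the closed bound. -/
private lemma stmt6_main {l : ℕ} (c : Fin l → ℝ) (hc : ∀ j, 0 < c j)
    (lamn : Fin l → ℝ) (D : ℝ) (hD : 0 ≤ D)
    (hrec : ∀ i, lamn i ≤ D * c i + ∑ j ∈ Finset.univ.filter (fun j => i < j), lamn j) :
    ∀ i, lamn i ≤ D * ∑ k ∈ Finset.univ.filter (fun k => i ≤ k),
        (2:ℝ)^((k:ℕ)-(i:ℕ)) * c k := by
  have key : ∀ n : ℕ, ∀ i : Fin l, l - (i:ℕ) ≤ n →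
      lamn i ≤ D * ∑ k ∈ Finset.univ.filter (fun k => i ≤ k),
        (2:ℝ)^((k:ℕ)-(i:ℕ)) * c k := by
    intro n
    induction n with
    | zero =>
      intro i hi
      exact absurd hi (by have := i.2; omega)
    | succ n ih =>
      intro i hi
      have h2 : ∑ j ∈ Finset.univ.filter (fun j : Fin l => i < j), lamn j
          ≤ D * ∑ j ∈ Finset.univ.filter (fun j : Fin l => i < j),
              ∑ k ∈ Finset.univ.filter (fun k => j ≤ k), (2:ℝ)^((k:ℕ)-(j:ℕ)) * c k := by
        rw [Finset.mul_sum]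
        refine Finset.sum_le_sum fun j hj => ih j ?_
        simp only [mem_filter, mem_univ, true_and, Fin.lt_def] at hj
        omega
      have h3 := stmt6_comb c hc l i (Nat.sub_le _ _)
      have h4 := mul_le_mul_of_nonneg_left h3 hD
      rw [mul_add] at h4
      have h5 := hrec i
      linarith
  intro i
  exact key l i (Nat.sub_le _ _)

theorem stmt6 {H E : Type*}
    [NormedAddCommGroup H] [InnerProductSpace ℂ H] [FiniteDimensional ℂ H]
    [NormedAddCommGroup E] [InnerProductSpace ℂ E] [FiniteDimensional ℂ E]
    {l : ℕ} (hl : 0 < l)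
    (emb : H →ₗᵢ[ℂ] E) (T : Fin l → (H →ₗᵢ[ℂ] E))
    (horth1 : ∀ j, ∀ u v : H, (inner ℂ (emb u) (T j v) : ℂ) = 0)
    (horth2 : ∀ i j, i ≠ j → ∀ u v : H, (inner ℂ (T i u) (T j v) : ℂ) = 0)
    (A : Fin l → Fin l → ℝ)
    (hA01 : ∀ i j, 0 ≤ A i j ∧ A i j ≤ 1)
    (hAtri : ∀ i j, j < i → A i j = 0)
    (hAdiag : ∀ i j, i ≤ j → A i j ≤ A i i)
    (hAsub : ∀ j, ∑ i ∈ Finset.univ.filter (fun i => i ≤ j), A i j ≤ 1)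
    (hApos : ∀ j, 0 < A j j)
    (W : Fin l → Submodule ℂ H)
    (TA : Fin l → (H →ₗ[ℂ] E))
    (hTA : ∀ j, TA j =
        (Complex.ofReal (Real.sqrt (1 - ∑ i ∈ Finset.univ.filter (fun i => i ≤ j), A i j)))
            • emb.toLinearMap
        + ∑ i ∈ Finset.univ.filter (fun i => i ≤ j),
            (Complex.ofReal (Real.sqrt (A i j))) • (T i).toLinearMap)
    (lam : Fin l → ℂ) (y : Fin l → H)
    (hy : ∀ j, y j ∈ W j) (hynorm : ∀ j, ‖y j‖ = 1)
    (h' : E) (hh' : h' = ∑ j, lam j • TA j (y j)) :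
    ∀ i, ‖lam i‖ ≤ ‖h'‖ *
        ∑ j ∈ Finset.univ.filter (fun j => i ≤ j),
          (2 : ℝ) ^ ((j : ℕ) - (i : ℕ)) * (A j j) ^ (-(1/2) : ℝ) := by
  classical
  -- inner products with the tilted isometries
  have hTi : ∀ i j : Fin l, ∀ u v : H, (inner ℂ (T i u) (TA j v) : ℂ)
      = if i ≤ j then (Real.sqrt (A i j) : ℂ) * inner ℂ u v else 0 := by
    intro i j u v
    rw [hTA j]
    simp only [LinearMap.add_apply, LinearMap.smul_apply, LinearMap.coe_sum,
      Finset.sum_apply, LinearIsometry.coe_toLinearMap, inner_add_right, inner_smul_right,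
      inner_sum]
    have h0 : (inner ℂ (T i u) (emb v) : ℂ) = 0 := by
      rw [← inner_conj_symm, horth1 i v u, map_zero]
    rw [h0, mul_zero, zero_add]
    by_cases hij : i ≤ j
    · rw [if_pos hij, Finset.sum_eq_single i]
      · rw [(T i).inner_map_map]
      · intro k hk hki
        rw [horth2 i k (Ne.symm hki) u v, mul_zero]
      · intro h
        simp only [mem_filter, mem_univ, true_and] at h
        exact absurd hij h
    · rw [if_neg hij]
      refine Finset.sum_eq_zero fun k hk => ?_
      have hk' : k ≤ j := by simpa using hk
      have hik : i ≠ k := fun e => hij (e ▸ hk')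
      rw [horth2 i k hik u v, mul_zero]
  -- inner product of T i (y i) with h'
  have hip : ∀ i : Fin l, (inner ℂ (T i (y i)) h' : ℂ)
      = ∑ j ∈ Finset.univ.filter (fun j => i ≤ j),
          lam j * (Real.sqrt (A i j) : ℂ) * inner ℂ (y i) (y j) := by
    intro i
    rw [hh', inner_sum, Finset.sum_filter]
    refine Finset.sum_congr rfl fun j _ => ?_
    rw [inner_smul_right, hTi i j (y i) (y j)]
    by_cases hij : i ≤ j
    · rw [if_pos hij, if_pos hij]; ring
    · rw [if_neg hij, if_neg hij, mul_zero]
  have hyy : ∀ j, (inner ℂ (y j) (y j) : ℂ) = 1 := by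
    intro j
    rw [inner_self_eq_norm_sq_to_K, hynorm j]
    norm_num
  -- the recurrence
  have hrec : ∀ i : Fin l, ‖lam i‖ ≤ ‖h'‖ * (A i i) ^ (-(1/2) : ℝ)
      + ∑ j ∈ Finset.univ.filter (fun j => i < j), ‖lam j‖ := by
    intro i
    have hs : 0 < Real.sqrt (A i i) := Real.sqrt_pos.mpr (hApos i)
    have hfe : Finset.univ.filter (fun j : Fin l => i ≤ j)
        = insert i (Finset.univ.filter (fun j : Fin l => i < j)) := by
      ext j
      simp only [mem_filter, mem_univ, true_and, mem_insert, Fin.le_def, Fin.lt_def, Fin.ext_iff]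
      omega
    have hne : i ∉ Finset.univ.filter (fun j : Fin l => i < j) := by simp
    have h1 := hip i
    rw [hfe, Finset.sum_insert hne, hyy i, mul_one] at h1
    have heq : lam i * (Real.sqrt (A i i) : ℂ)
        = inner ℂ (T i (y i)) h' - ∑ j ∈ Finset.univ.filter (fun j : Fin l => i < j),
            lam j * (Real.sqrt (A i j) : ℂ) * inner ℂ (y i) (y j) := by
      rw [h1]; ring
    have hnorm1 : ‖(inner ℂ (T i (y i)) h' : ℂ)‖ ≤ ‖h'‖ := by
      calc ‖(inner ℂ (T i (y i)) h' : ℂ)‖ ≤ ‖T i (y i)‖ * ‖h'‖ := norm_inner_le_norm _ _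
      _ = ‖h'‖ := by rw [(T i).norm_map, hynorm i, one_mul]
    have hterm : ∀ j ∈ Finset.univ.filter (fun j : Fin l => i < j),
        ‖lam j * (Real.sqrt (A i j) : ℂ) * inner ℂ (y i) (y j)‖
          ≤ Real.sqrt (A i i) * ‖lam j‖ := by
      intro j hj
      have hij : i ≤ j := le_of_lt (by simpa using hj)
      have h2 : ‖(inner ℂ (y i) (y j) : ℂ)‖ ≤ 1 := by
        calc ‖(inner ℂ (y i) (y j) : ℂ)‖ ≤ ‖y i‖ * ‖y j‖ := norm_inner_le_norm _ _
        _ = 1 := by rw [hynorm, hynorm, one_mul]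
      have h3 : Real.sqrt (A i j) ≤ Real.sqrt (A i i) := Real.sqrt_le_sqrt (hAdiag i j hij)
      have h4 : ‖((Real.sqrt (A i j) : ℝ) : ℂ)‖ = Real.sqrt (A i j) := by
        rw [Complex.norm_real, Real.norm_eq_abs, abs_of_nonneg (Real.sqrt_nonneg _)]
      rw [norm_mul, norm_mul, h4]
      calc ‖lam j‖ * Real.sqrt (A i j) * ‖(inner ℂ (y i) (y j) : ℂ)‖
          ≤ ‖lam j‖ * Real.sqrt (A i i) * 1 := by
            apply mul_le_mul (mul_le_mul_of_nonneg_left h3 (norm_nonneg _)) h2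
              (norm_nonneg _) (by positivity)
      _ = Real.sqrt (A i i) * ‖lam j‖ := by ring
    have h5 : ‖lam i‖ * Real.sqrt (A i i)
        ≤ ‖h'‖ + Real.sqrt (A i i) * ∑ j ∈ Finset.univ.filter (fun j : Fin l => i < j), ‖lam j‖ := by
      have h6 : ‖lam i * ((Real.sqrt (A i i) : ℝ) : ℂ)‖ = ‖lam i‖ * Real.sqrt (A i i) := by
        rw [norm_mul, Complex.norm_real, Real.norm_eq_abs, abs_of_nonneg (Real.sqrt_nonneg _)]
      calc ‖lam i‖ * Real.sqrt (A i i) = ‖lam i * ((Real.sqrt (A i i) : ℝ) : ℂ)‖ := h6.symm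
      _ = ‖(inner ℂ (T i (y i)) h' : ℂ) - ∑ j ∈ Finset.univ.filter (fun j : Fin l => i < j),
            lam j * (Real.sqrt (A i j) : ℂ) * inner ℂ (y i) (y j)‖ := by rw [heq]
      _ ≤ ‖(inner ℂ (T i (y i)) h' : ℂ)‖ + ‖∑ j ∈ Finset.univ.filter (fun j : Fin l => i < j),
            lam j * (Real.sqrt (A i j) : ℂ) * inner ℂ (y i) (y j)‖ := norm_sub_le _ _
      _ ≤ ‖h'‖ + ∑ j ∈ Finset.univ.filter (fun j : Fin l => i < j),
            ‖lam j * (Real.sqrt (A i j) : ℂ) * inner ℂ (y i) (y j)‖ :=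
        add_le_add hnorm1 (norm_sum_le _ _)
      _ ≤ ‖h'‖ + ∑ j ∈ Finset.univ.filter (fun j : Fin l => i < j),
            Real.sqrt (A i i) * ‖lam j‖ :=
        add_le_add_right (Finset.sum_le_sum hterm) _
      _ = ‖h'‖ + Real.sqrt (A i i) * ∑ j ∈ Finset.univ.filter (fun j : Fin l => i < j), ‖lam j‖ := by
        rw [Finset.mul_sum]
    have hci : (A i i) ^ (-(1/2) : ℝ) = (Real.sqrt (A i i))⁻¹ := by
      rw [Real.rpow_neg (hApos i).le, Real.sqrt_eq_rpow]
    rw [hci]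
    have h7 : ‖lam i‖ ≤ (‖h'‖ + Real.sqrt (A i i)
        * ∑ j ∈ Finset.univ.filter (fun j : Fin l => i < j), ‖lam j‖) / Real.sqrt (A i i) :=
      (le_div_iff₀ hs).mpr h5
    calc ‖lam i‖ ≤ _ := h7
    _ = ‖h'‖ * (Real.sqrt (A i i))⁻¹
        + ∑ j ∈ Finset.univ.filter (fun j : Fin l => i < j), ‖lam j‖ := by
      field_simp
  -- conclude
  exact stmt6_main (fun j => (A j j) ^ (-(1/2) : ℝ))
    (fun j => Real.rpow_pos_of_pos (hApos j) _)
    (fun j => ‖lam j‖) ‖h'‖ (norm_nonneg _) hrec
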